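/- Let X be a finite set and 𝒞 a finite set of clusters on X. If there exists an ST-set tree sequence for 𝒞 of length k, then there exists an ST-set tree sequence S₁, …, S_m for 𝒞 with m ≤ k in which each S_i is a maximal ST-set of 𝒞_{i−1}. In particular, the minimum tree-sequence length minlen(𝒞) is attained by a sequence consisting of maximal ST-sets at every step. -/

import Mathlib

/-- Two clusters are compatible if one contains the other or they are disjoint. -/
def Compatible {α : Type*} [DecidableEq α] (A B : Finset α) : Prop :=
  A ⊆ B ∨ B ⊆ A ∨ A ∩ B = ∅

/-- A set of clusters is compatible if its elements are pairwise compatible. -/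
def CompatibleSet {α : Type*} [DecidableEq α] (𝒞 : Finset (Finset α)) : Prop :=
  ∀ A ∈ 𝒞, ∀ B ∈ 𝒞, Compatible A B

/-- The restriction 𝒞|S = { C ∩ S : C ∈ 𝒞 }. -/
def restrictCl {α : Type*} [DecidableEq α] (𝒞 : Finset (Finset α)) (S : Finset α) :
    Finset (Finset α) :=
  𝒞.image (· ∩ S)

/-- The removal 𝒞 ∖ S = { C \ S : C ∈ 𝒞 }. -/
def removeCl {α : Type*} [DecidableEq α] (𝒞 : Finset (Finset α)) (S : Finset α) :
    Finset (Finset α) :=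
  𝒞.image (· \ S)

/-- S is an ST-set of 𝒞: S is compatible with every cluster of 𝒞 and 𝒞|S is compatible. -/
def IsSTSet {α : Type*} [DecidableEq α] (𝒞 : Finset (Finset α)) (S : Finset α) : Prop :=
  (∀ C ∈ 𝒞, Compatible S C) ∧ CompatibleSet (restrictCl 𝒞 S)

/-- S is a maximal ST-set of 𝒞: an ST-set that is not a proper subset of any other ST-set. -/
def IsMaxSTSet {α : Type*} [DecidableEq α] (𝒞 : Finset (Finset α)) (S : Finset α) : Prop :=
  IsSTSet 𝒞 S ∧ ∀ T : Finset α, IsSTSet 𝒞 T → ¬ S ⊂ T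

/-- The cluster set obtained after removing, in order, the sets of the list L. -/
def afterSeq {α : Type*} [DecidableEq α] (𝒞 : Finset (Finset α)) :
    List (Finset α) → Finset (Finset α)
  | [] => 𝒞
  | S :: L => afterSeq (removeCl 𝒞 S) L

/-- L = S₁, …, S_k is an ST-set sequence for 𝒞: each S_i is an ST-set of 𝒞_{i-1}. -/
def IsSTSeq {α : Type*} [DecidableEq α] (𝒞 : Finset (Finset α)) : List (Finset α) → Prop
  | [] => True
  | S :: L => IsSTSet 𝒞 S ∧ IsSTSeq (removeCl 𝒞 S) L

/-- A tree sequence: an ST-set sequence whose final cluster set is compatible. -/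
def IsTreeSeq {α : Type*} [DecidableEq α] (𝒞 : Finset (Finset α)) (L : List (Finset α)) : Prop :=
  IsSTSeq 𝒞 L ∧ CompatibleSet (afterSeq 𝒞 L)

/-- The minimum length of an ST-set tree sequence for 𝒞. -/
noncomputable def minlen {α : Type*} [DecidableEq α] (𝒞 : Finset (Finset α)) : ℕ :=
  sInf {k : ℕ | ∃ L : List (Finset α), IsTreeSeq 𝒞 L ∧ L.length = k}

/-- L = S₁, …, S_k is a sequence in which each S_i is a maximal ST-set of 𝒞_{i-1}. -/
def IsMaxSTSeq {α : Type*} [DecidableEq α] (𝒞 : Finset (Finset α)) : List (Finset α) → Prop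
  | [] => True
  | S :: L => IsMaxSTSet 𝒞 S ∧ IsMaxSTSeq (removeCl 𝒞 S) L

section Aux

variable {α : Type*} [DecidableEq α]

lemma Compatible.sdiff' {A B U : Finset α} (h : Compatible A B) :
    Compatible (A \ U) (B \ U) := by
  rcases h with h | h | h
  · exact Or.inl (Finset.sdiff_subset_sdiff h (le_refl _))
  · exact Or.inr (Or.inl (Finset.sdiff_subset_sdiff h (le_refl _)))
  · refine Or.inr (Or.inr ?_)
    ext x
    simp only [Finset.mem_inter, Finset.mem_sdiff, Finset.notMem_empty, iff_false]
    rintro ⟨⟨hA, hU⟩, hB, -⟩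
    have : x ∈ A ∩ B := Finset.mem_inter.2 ⟨hA, hB⟩
    rw [h] at this
    exact absurd this (Finset.notMem_empty x)

lemma CompatibleSet.removeCl' {𝒟 : Finset (Finset α)} {U : Finset α}
    (h : CompatibleSet 𝒟) : CompatibleSet (removeCl 𝒟 U) := by
  intro A hA B hB
  simp only [removeCl, Finset.mem_image] at hA hB
  obtain ⟨A', hA', rfl⟩ := hA
  obtain ⟨B', hB', rfl⟩ := hB
  exact (h A' hA' B' hB').sdiff'

lemma restrict_remove_comm (𝒟 : Finset (Finset α)) (S U : Finset α) :
    restrictCl (removeCl 𝒟 U) (S \ U) = removeCl (restrictCl 𝒟 S) U := by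
  simp only [restrictCl, removeCl, Finset.image_image]
  apply Finset.image_congr
  intro C _
  ext x
  simp only [Function.comp_apply, Finset.mem_inter, Finset.mem_sdiff]
  tauto

lemma remove_remove_comm (𝒟 : Finset (Finset α)) (S U : Finset α) :
    removeCl (removeCl 𝒟 U) (S \ U) = removeCl (removeCl 𝒟 S) (U \ S) := by
  simp only [removeCl, Finset.image_image]
  apply Finset.image_congr
  intro C _
  ext x
  simp only [Function.comp_apply, Finset.mem_sdiff]
  tauto

lemma remove_remove_of_subset (𝒟 : Finset (Finset α)) {S T : Finset α} (h : S ⊆ T) :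
    removeCl (removeCl 𝒟 S) (T \ S) = removeCl 𝒟 T := by
  simp only [removeCl, Finset.image_image]
  apply Finset.image_congr
  intro C _
  ext x
  simp only [Function.comp_apply, Finset.mem_sdiff]
  constructor
  · rintro ⟨⟨hC, hS⟩, hT⟩
    refine ⟨hC, fun hxT => ?_⟩
    exact (hT ⟨hxT, hS⟩).elim
  · rintro ⟨hC, hT⟩
    exact ⟨⟨hC, fun hx => hT (h hx)⟩, fun hx => hT hx.1⟩

lemma IsSTSet.sdiff_remove {𝒟 : Finset (Finset α)} {S U : Finset α}
    (hS : IsSTSet 𝒟 S) (hU : IsSTSet 𝒟 U) : IsSTSet (removeCl 𝒟 U) (S \ U) := by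
  constructor
  · intro C hC
    simp only [removeCl, Finset.mem_image] at hC
    obtain ⟨C', hC', rfl⟩ := hC
    exact (hS.1 C' hC').sdiff'
  · rw [restrict_remove_comm]
    exact hS.2.removeCl'

/-- Pushing a tree sequence through the removal of an ST-set. -/
lemma push_treeSeq : ∀ (L : List (Finset α)) (𝒟 : Finset (Finset α)) (U : Finset α),
    IsSTSet 𝒟 U → IsTreeSeq 𝒟 L →
    ∃ M : List (Finset α), IsTreeSeq (removeCl 𝒟 U) M ∧ M.length ≤ L.length := by
  intro L
  induction L with
  | nil =>
    intro 𝒟 U _ hL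
    exact ⟨[], ⟨trivial, hL.2.removeCl'⟩, le_refl _⟩
  | cons S L' ih =>
    intro 𝒟 U hU hL
    obtain ⟨⟨hS, hseq⟩, hcomp⟩ := hL
    have hL' : IsTreeSeq (removeCl 𝒟 S) L' := ⟨hseq, hcomp⟩
    have hUS : IsSTSet (removeCl 𝒟 S) (U \ S) := hU.sdiff_remove hS
    obtain ⟨M, hM, hMlen⟩ := ih (removeCl 𝒟 S) (U \ S) hUS hL'
    rw [← remove_remove_comm] at hM
    refine ⟨(S \ U) :: M, ⟨⟨hS.sdiff_remove hU, hM.1⟩, hM.2⟩, ?_⟩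
    simpa using Nat.succ_le_succ hMlen

/-- Every ST-set is contained in a maximal ST-set. -/
lemma exists_maxSTSet_superset [Fintype α] {𝒞 : Finset (Finset α)} {S : Finset α}
    (hS : IsSTSet 𝒞 S) : ∃ T : Finset α, IsMaxSTSet 𝒞 T ∧ S ⊆ T := by
  have hfin : ({T : Finset α | IsSTSet 𝒞 T ∧ S ⊆ T}).Finite := Set.toFinite _
  obtain ⟨T, hT, hmax⟩ := Set.Finite.exists_maximalFor Finset.card _ hfin
    ⟨S, hS, le_refl _⟩
  refine ⟨T, ⟨hT.1, ?_⟩, hT.2⟩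
  intro T' hT' hsub
  have hmem : T' ∈ {T : Finset α | IsSTSet 𝒞 T ∧ S ⊆ T} :=
    ⟨hT', hT.2.trans hsub.subset⟩
  have hcard := Finset.card_lt_card hsub
  have := hmax (j := T') hmem (le_of_lt hcard)
  omega

/-- Main induction: any tree sequence can be replaced by a maximal one of no greater length. -/
lemma exists_max_le [Fintype α] : ∀ (k : ℕ) (𝒞 : Finset (Finset α)) (L : List (Finset α)),
    IsTreeSeq 𝒞 L → L.length ≤ k →
    ∃ L' : List (Finset α), IsTreeSeq 𝒞 L' ∧ IsMaxSTSeq 𝒞 L' ∧ L'.length ≤ L.length := by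
  intro k
  induction k with
  | zero =>
    intro 𝒞 L hL hlen
    have : L = [] := List.length_eq_zero_iff.1 (Nat.le_zero.1 hlen)
    subst this
    exact ⟨[], hL, trivial, le_refl _⟩
  | succ k ih =>
    intro 𝒞 L hL hlen
    match L with
    | [] => exact ⟨[], hL, trivial, le_refl _⟩
    | S :: L' =>
      obtain ⟨⟨hS, hseq⟩, hcomp⟩ := hL
      obtain ⟨T, hTmax, hST⟩ := exists_maxSTSet_superset hS
      have hTS : IsSTSet (removeCl 𝒞 S) (T \ S) := hTmax.1.sdiff_remove hS
      obtain ⟨M, hM, hMlen⟩ := push_treeSeq L' (removeCl 𝒞 S) (T \ S) hTS ⟨hseq, hcomp⟩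
      rw [remove_remove_of_subset 𝒞 hST] at hM
      have hlen' : M.length ≤ k := by
        simp only [List.length_cons] at hlen
        omega
      obtain ⟨M', hM', hM'max, hM'len⟩ := ih (removeCl 𝒞 T) M hM hlen'
      refine ⟨T :: M', ⟨⟨hTmax.1, hM'.1⟩, hM'.2⟩, ⟨hTmax, hM'max⟩, ?_⟩
      simp only [List.length_cons]
      omega

end Aux

/-- any tree sequence of length k can be replaced by a tree sequence of
length at most k consisting of maximal ST-sets at every step; in particular minlen 𝒞
is attained by such a sequence. -/
theorem exists_maximal_treeSeq {α : Type*} [Fintype α] [DecidableEq α]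
    (𝒞 : Finset (Finset α)) (k : ℕ)
    (h : ∃ L : List (Finset α), IsTreeSeq 𝒞 L ∧ L.length = k) :
    (∃ L' : List (Finset α), IsTreeSeq 𝒞 L' ∧ IsMaxSTSeq 𝒞 L' ∧ L'.length ≤ k) ∧
    (∃ L' : List (Finset α), IsTreeSeq 𝒞 L' ∧ IsMaxSTSeq 𝒞 L' ∧ L'.length = minlen 𝒞) := by
  obtain ⟨L, hL, hLk⟩ := h
  constructor
  · obtain ⟨L', h1, h2, h3⟩ := exists_max_le L.length 𝒞 L hL (le_refl _)
    exact ⟨L', h1, h2, by omega⟩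
  · have hne : {n : ℕ | ∃ L : List (Finset α), IsTreeSeq 𝒞 L ∧ L.length = n}.Nonempty :=
      ⟨k, L, hL, hLk⟩
    have hmem := Nat.sInf_mem hne
    obtain ⟨L₀, hL₀, hL₀len⟩ := hmem
    obtain ⟨L', h1, h2, h3⟩ := exists_max_le L₀.length 𝒞 L₀ hL₀ (le_refl _)
    refine ⟨L', h1, h2, le_antisymm (by rw [minlen, ← hL₀len]; exact h3) ?_⟩
    exact Nat.sInf_le ⟨L', h1, rfl⟩
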